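/- Fix ε₀ > 0 sufficiently small and set α := 1 + ε₀ and ε₁ := ε₀²/18. Define λ_q := ⌊λ₀^{α^q}⌋ for a real parameter λ₀, δ_q := λ_q^{−2/5+2ε₀}, μ_{q+1} := δ_q^{1/4} δ_{q+1}^{1/4} λ_q^{1/2} λ_{q+1}^{1/2}, and ℓ_{q+1} := λ_{q+1}^{−1+ε₁}. Then for all sufficiently large λ₀ the following inequalities hold for every q ∈ ℕ: (i) Σ_{j<q} δ_j λ_j ≤ δ_q λ_q; (ii) δ_q^{1/2} λ_q ℓ_{q+1} ≤ δ_{q+1}^{1/2}; (iii) δ_q^{1/2} λ_q / μ_{q+1} ≤ λ_{q+1}^{−ε₁}; (iv) 1/λ_{q+1} ≤ δ_{q+1}^{1/2} / μ_{q+1}; and (v) μ_{q+1} ≥ 2^{q+3}. -/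

import Mathlib

open scoped BigOperators

noncomputable section

/-- `λ_q := ⌊λ₀^{(1+ε₀)^q}⌋`. -/
def lamP (l₀ ε₀ : ℝ) (q : ℕ) : ℝ := ((⌊l₀ ^ ((1 + ε₀) ^ q)⌋ : ℤ) : ℝ)

/-- `δ_q := λ_q^{−2/5+2ε₀}`. -/
def delP (l₀ ε₀ : ℝ) (q : ℕ) : ℝ := lamP l₀ ε₀ q ^ (-(2 : ℝ)/5 + 2 * ε₀)

/-- `μ_q := δ_{q−1}^{1/4} δ_q^{1/4} λ_{q−1}^{1/2} λ_q^{1/2}` (for `q ≥ 1`). -/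
def muP (l₀ ε₀ : ℝ) (q : ℕ) : ℝ :=
  delP l₀ ε₀ (q - 1) ^ ((1 : ℝ)/4) * delP l₀ ε₀ q ^ ((1 : ℝ)/4)
    * lamP l₀ ε₀ (q - 1) ^ ((1 : ℝ)/2) * lamP l₀ ε₀ q ^ ((1 : ℝ)/2)

/-- `ℓ_q := λ_q^{−1+ε₁}` with `ε₁ = ε₀²/18` (for `q ≥ 1`). -/
def ellP (l₀ ε₀ : ℝ) (q : ℕ) : ℝ := lamP l₀ ε₀ q ^ (-(1 : ℝ) + ε₀ ^ 2 / 18)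

private lemma two_le_l₀' {ε₀ l₀ : ℝ} (hε : 0 < ε₀) (hε1 : ε₀ ≤ 1)
    (hl : (2:ℝ) ^ ((100:ℝ)/ε₀) ≤ l₀) : (2:ℝ) ≤ l₀ := by
  have h1 : (1:ℝ) ≤ 100/ε₀ := by rw [le_div_iff₀ hε]; linarith
  calc (2:ℝ) = 2 ^ (1:ℝ) := (Real.rpow_one 2).symm
    _ ≤ 2 ^ ((100:ℝ)/ε₀) := Real.rpow_le_rpow_of_exponent_le one_le_two h1
    _ ≤ l₀ := hl

private lemma lam_facts' {ε₀ l₀ : ℝ} (hε : 0 < ε₀) (hl2 : (2:ℝ) ≤ l₀) (q : ℕ) :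
    1 ≤ lamP l₀ ε₀ q ∧ l₀ ^ ((1+ε₀)^q : ℝ) / 2 ≤ lamP l₀ ε₀ q ∧
      lamP l₀ ε₀ q ≤ l₀ ^ ((1+ε₀)^q : ℝ) := by
  have hl1 : (1:ℝ) ≤ l₀ := by linarith
  have ha : (1:ℝ) ≤ (1+ε₀)^q := one_le_pow₀ (by linarith)
  have hx2 : (2:ℝ) ≤ l₀ ^ ((1+ε₀)^q : ℝ) := by
    calc (2:ℝ) ≤ l₀ := hl2
      _ = l₀ ^ (1:ℝ) := (Real.rpow_one l₀).symm
      _ ≤ l₀ ^ ((1+ε₀)^q : ℝ) := Real.rpow_le_rpow_of_exponent_le hl1 ha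
  have hle : lamP l₀ ε₀ q ≤ l₀ ^ ((1+ε₀)^q : ℝ) := Int.floor_le _
  have hge : l₀ ^ ((1+ε₀)^q : ℝ) - 1 ≤ lamP l₀ ε₀ q := (Int.sub_one_lt_floor _).le
  exact ⟨by linarith, by linarith, hle⟩

private lemma keyP {ε₀ l₀ : ℝ} (hε : 0 < ε₀) (hε1 : ε₀ ≤ 1)
    (hl : (2:ℝ) ^ ((100:ℝ)/ε₀) ≤ l₀) (q : ℕ) {p r : ℝ} (hp : 0 ≤ p) (hr1 : r ≤ 1)
    (hm : p + ε₀/3 ≤ (1+ε₀)*r) :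
    2 * lamP l₀ ε₀ q ^ p ≤ lamP l₀ ε₀ (q+1) ^ r := by
  have hl2 := two_le_l₀' hε hε1 hl
  have hl0 : (0:ℝ) < l₀ := by linarith
  have hl1 : (1:ℝ) ≤ l₀ := by linarith
  obtain ⟨hL1, hLg, hLl⟩ := lam_facts' hε hl2 q
  obtain ⟨hL1', hLg', hLl'⟩ := lam_facts' hε hl2 (q+1)
  set a : ℝ := (1+ε₀)^q with ha
  have ha1 : (1:ℝ) ≤ a := one_le_pow₀ (by linarith)
  have hr0 : 0 < r := by nlinarith
  have haq1 : ((1+ε₀):ℝ)^(q+1) = a * (1+ε₀) := by rw [ha, pow_succ]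
  rw [haq1] at hLg'
  have s1 : lamP l₀ ε₀ q ^ p ≤ l₀ ^ (a*p) := by
    calc lamP l₀ ε₀ q ^ p ≤ (l₀ ^ a) ^ p := Real.rpow_le_rpow (by linarith) hLl hp
      _ = l₀ ^ (a*p) := (Real.rpow_mul hl0.le a p).symm
  have s2 : l₀ ^ (a*(1+ε₀)*r) / 2 ≤ lamP l₀ ε₀ (q+1) ^ r := by
    have h2 : (l₀ ^ (a*(1+ε₀)) / 2) ^ r ≤ lamP l₀ ε₀ (q+1) ^ r :=
      Real.rpow_le_rpow (by positivity) hLg' hr0.le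
    refine le_trans ?_ h2
    rw [Real.div_rpow (by positivity) (by norm_num), Real.rpow_mul hl0.le]
    have h3 : (2:ℝ) ^ r ≤ 2 := by
      calc (2:ℝ)^r ≤ 2^(1:ℝ) := Real.rpow_le_rpow_of_exponent_le one_le_two hr1
        _ = 2 := Real.rpow_one 2
    gcongr
  have hm2 : a*p + ε₀/3 ≤ a*(1+ε₀)*r := by
    have hd : ε₀/3 ≤ (1+ε₀)*r - p := by linarith
    have h4 : 1*(ε₀/3) ≤ a*((1+ε₀)*r - p) :=
      mul_le_mul ha1 hd (by positivity) (by linarith)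
    nlinarith [h4]
  have h5 : (4:ℝ) ≤ l₀ ^ (ε₀/3) := by
    have heq : (100/ε₀) * (ε₀/3) = (100:ℝ)/3 := by field_simp
    calc (4:ℝ) = 2 ^ ((2:ℕ):ℝ) := by rw [Real.rpow_natCast]; norm_num
      _ ≤ 2 ^ ((100/ε₀) * (ε₀/3)) := by
          apply Real.rpow_le_rpow_of_exponent_le one_le_two
          rw [heq]; norm_num
      _ = ((2:ℝ) ^ ((100:ℝ)/ε₀)) ^ (ε₀/3) := Real.rpow_mul (by norm_num) _ _
      _ ≤ l₀ ^ (ε₀/3) := Real.rpow_le_rpow (by positivity) hl (by positivity)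
  have s3 : 4 * l₀ ^ (a*p) ≤ l₀ ^ (a*(1+ε₀)*r) := by
    calc 4 * l₀ ^ (a*p) ≤ l₀ ^ (ε₀/3) * l₀ ^ (a*p) := by
          have := Real.rpow_nonneg hl0.le (a*p)
          nlinarith
      _ = l₀ ^ (ε₀/3 + a*p) := (Real.rpow_add hl0 _ _).symm
      _ ≤ l₀ ^ (a*(1+ε₀)*r) := Real.rpow_le_rpow_of_exponent_le hl1 (by linarith)
  have hLpn : 0 ≤ lamP l₀ ε₀ q ^ p := Real.rpow_nonneg (by linarith) _
  calc 2 * lamP l₀ ε₀ q ^ p ≤ 2 * l₀ ^ (a*p) := by nlinarith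
    _ ≤ l₀ ^ (a*(1+ε₀)*r) / 2 := by linarith
    _ ≤ lamP l₀ ε₀ (q+1) ^ r := s2

private lemma sum_le_of_double' (t : ℕ → ℝ) (h0 : ∀ j, 0 ≤ t j)
    (h : ∀ j, 2 * t j ≤ t (j+1)) (q : ℕ) : ∑ j ∈ Finset.range q, t j ≤ t q := by
  induction q with
  | zero => simpa using h0 0
  | succ n ih => rw [Finset.sum_range_succ]; have := h n; linarith

set_option maxHeartbeats 1600000 in
/-- **Ordering of the parameters** (Section 4 of the paper): for `ε₀` sufficiently small
and `λ₀` sufficiently large, the inequalities (i)–(v) hold for every `q ∈ ℕ`. -/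
theorem parameter_ordering :
    ∃ ε' : ℝ, 0 < ε' ∧ ∀ ε₀ : ℝ, 0 < ε₀ → ε₀ < ε' →
    ∃ Λ₀ : ℝ, ∀ l₀ : ℝ, Λ₀ ≤ l₀ → ∀ q : ℕ,
      -- (i)
      (∑ j ∈ Finset.range q, delP l₀ ε₀ j * lamP l₀ ε₀ j
          ≤ delP l₀ ε₀ q * lamP l₀ ε₀ q) ∧
      -- (ii)
      delP l₀ ε₀ q ^ ((1 : ℝ)/2) * lamP l₀ ε₀ q * ellP l₀ ε₀ (q + 1)
          ≤ delP l₀ ε₀ (q + 1) ^ ((1 : ℝ)/2) ∧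
      -- (iii)
      delP l₀ ε₀ q ^ ((1 : ℝ)/2) * lamP l₀ ε₀ q / muP l₀ ε₀ (q + 1)
          ≤ lamP l₀ ε₀ (q + 1) ^ (-(ε₀ ^ 2 / 18)) ∧
      -- (iv)
      1 / lamP l₀ ε₀ (q + 1) ≤ delP l₀ ε₀ (q + 1) ^ ((1 : ℝ)/2) / muP l₀ ε₀ (q + 1) ∧
      -- (v)
      (2 : ℝ) ^ (q + 3) ≤ muP l₀ ε₀ (q + 1) := by
  refine ⟨1/100, by norm_num, fun ε₀ hε hε' => ?_⟩
  refine ⟨(2:ℝ) ^ ((100:ℝ)/ε₀), fun l₀ hl => ?_⟩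
  have hε1 : ε₀ ≤ 1 := by linarith
  have hl2 := two_le_l₀' hε hε1 hl
  have hl0 : (0:ℝ) < l₀ := by linarith
  have hl1 : (1:ℝ) ≤ l₀ := by linarith
  have hL1 : ∀ n, 1 ≤ lamP l₀ ε₀ n := fun n => (lam_facts' hε hl2 n).1
  have hpos : ∀ n, (0:ℝ) < lamP l₀ ε₀ n := fun n => lt_of_lt_of_le one_pos (hL1 n)
  intro q
  have hq0 := hpos q
  have hq1 := hpos (q+1)
  -- abbreviations
  set e : ℝ := -(2:ℝ)/5 + 2*ε₀ with hedef
  set s : ℝ := e*(1/4) + 1/2 with hsdef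
  have hse : s = -(2:ℝ)/5*(1/4) + 2*ε₀*(1/4) + 1/2 := by rw [hsdef, hedef]; ring
  -- rewriting lemmas
  have hdel : ∀ n, delP l₀ ε₀ n ^ ((1:ℝ)/2) = lamP l₀ ε₀ n ^ (e*(1/2)) := by
    intro n
    rw [delP, ← Real.rpow_mul (hpos n).le]
  have hdl : ∀ n, delP l₀ ε₀ n * lamP l₀ ε₀ n = lamP l₀ ε₀ n ^ (e+1) := by
    intro n
    rw [delP, Real.rpow_add_one (hpos n).ne']
  have hmu : muP l₀ ε₀ (q+1) = lamP l₀ ε₀ q ^ s * lamP l₀ ε₀ (q+1) ^ s := by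
    rw [muP, delP, delP]
    simp only [Nat.add_sub_cancel]
    rw [← Real.rpow_mul hq0.le, ← Real.rpow_mul hq1.le]
    rw [show ∀ A B C D : ℝ, A*B*C*D = (A*C)*(B*D) from fun A B C D => by ring]
    rw [← Real.rpow_add hq0, ← Real.rpow_add hq1]
  have hmupos : 0 < muP l₀ ε₀ (q+1) := by
    rw [hmu]; positivity
  refine ⟨?_, ?_, ?_, ?_, ?_⟩
  -- (i)
  · simp only [hdl]
    refine sum_le_of_double' _ (fun j => Real.rpow_nonneg (hpos j).le _) (fun j => ?_) q
    exact keyP hε hε1 hl j (by rw [hedef]; linarith) (by rw [hedef]; linarith)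
      (by rw [hedef]; nlinarith)
  -- (ii)
  · rw [hdel, hdel, ellP, ← Real.rpow_add_one hq0.ne']
    have hk : lamP l₀ ε₀ q ^ (e*(1/2)+1)
        ≤ lamP l₀ ε₀ (q+1) ^ (e*(1/2)+1-ε₀^2/18) := by
      have h := keyP hε hε1 hl q (p := e*(1/2)+1) (r := e*(1/2)+1-ε₀^2/18)
        (by rw [hedef]; linarith) (by rw [hedef]; nlinarith) (by rw [hedef]; nlinarith)
      have := Real.rpow_nonneg hq0.le (e*(1/2)+1)
      linarith
    calc lamP l₀ ε₀ q ^ (e*(1/2)+1) * lamP l₀ ε₀ (q+1) ^ (-(1:ℝ) + ε₀^2/18)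
        ≤ lamP l₀ ε₀ (q+1) ^ (e*(1/2)+1-ε₀^2/18) * lamP l₀ ε₀ (q+1) ^ (-(1:ℝ) + ε₀^2/18) :=
          mul_le_mul_of_nonneg_right hk (Real.rpow_nonneg hq1.le _)
      _ = lamP l₀ ε₀ (q+1) ^ (e*(1/2)) := by
          rw [← Real.rpow_add hq1]; congr 1; ring
  -- (iii)
  · rw [hdel, ← Real.rpow_add_one hq0.ne', hmu]
    have hrw : lamP l₀ ε₀ q ^ (e*(1/2)+1) / (lamP l₀ ε₀ q ^ s * lamP l₀ ε₀ (q+1) ^ s)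
        = lamP l₀ ε₀ q ^ (e*(1/2)+1-s) * lamP l₀ ε₀ (q+1) ^ (-s) := by
      rw [div_mul_eq_div_div, ← Real.rpow_sub hq0, div_eq_mul_inv,
        ← Real.rpow_neg hq1.le]
    rw [hrw]
    have hk : lamP l₀ ε₀ q ^ (e*(1/2)+1-s)
        ≤ lamP l₀ ε₀ (q+1) ^ (e*(1/2)+1-s-ε₀^2/18) := by
      have h := keyP hε hε1 hl q (p := e*(1/2)+1-s) (r := e*(1/2)+1-s-ε₀^2/18)
        (by rw [hse, hedef]; nlinarith) (by rw [hse, hedef]; nlinarith)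
        (by rw [hse, hedef]; nlinarith)
      have := Real.rpow_nonneg hq0.le (e*(1/2)+1-s)
      linarith
    calc lamP l₀ ε₀ q ^ (e*(1/2)+1-s) * lamP l₀ ε₀ (q+1) ^ (-s)
        ≤ lamP l₀ ε₀ (q+1) ^ (e*(1/2)+1-s-ε₀^2/18) * lamP l₀ ε₀ (q+1) ^ (-s) :=
          mul_le_mul_of_nonneg_right hk (Real.rpow_nonneg hq1.le _)
      _ = lamP l₀ ε₀ (q+1) ^ (-(ε₀^2/18)) := by
          rw [← Real.rpow_add hq1]; congr 1; rw [hse, hedef]; ring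
  -- (iv)
  · rw [div_le_div_iff₀ hq1 hmupos, one_mul, hmu, hdel,
      ← Real.rpow_add_one hq1.ne']
    have hk : lamP l₀ ε₀ q ^ s ≤ lamP l₀ ε₀ (q+1) ^ s := by
      have h := keyP hε hε1 hl q (p := s) (r := s)
        (by rw [hse]; linarith) (by rw [hse]; linarith) (by rw [hse]; nlinarith)
      have := Real.rpow_nonneg hq0.le s
      linarith
    calc lamP l₀ ε₀ q ^ s * lamP l₀ ε₀ (q+1) ^ s
        ≤ lamP l₀ ε₀ (q+1) ^ s * lamP l₀ ε₀ (q+1) ^ s :=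
          mul_le_mul_of_nonneg_right hk (Real.rpow_nonneg hq1.le _)
      _ = lamP l₀ ε₀ (q+1) ^ (e*(1/2)+1) := by
          rw [← Real.rpow_add hq1]; congr 1; rw [hsdef]; ring
  -- (v)
  · have hb : (1:ℝ) + ((q:ℝ)+1)*ε₀ ≤ (1+ε₀)^(q+1) := by
      have h := one_add_mul_le_pow (a := ε₀) (by linarith) (q+1)
      push_cast at h
      linarith
    have hxq1 : (2:ℝ) ^ ((100:ℝ)/ε₀ + 100*((q:ℝ)+1)) ≤ l₀ ^ ((1+ε₀:ℝ)^(q+1)) := by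
      calc (2:ℝ) ^ ((100:ℝ)/ε₀ + 100*((q:ℝ)+1))
          = (2:ℝ) ^ ((100/ε₀) * (1+((q:ℝ)+1)*ε₀)) := by
            congr 1; field_simp
        _ = ((2:ℝ) ^ ((100:ℝ)/ε₀)) ^ ((1:ℝ)+((q:ℝ)+1)*ε₀) := Real.rpow_mul (by norm_num) _ _
        _ ≤ l₀ ^ ((1:ℝ)+((q:ℝ)+1)*ε₀) := Real.rpow_le_rpow (by positivity) hl (by positivity)
        _ ≤ l₀ ^ ((1+ε₀:ℝ)^(q+1)) := Real.rpow_le_rpow_of_exponent_le hl1 hb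
    have hLq1 : (2:ℝ) ^ ((5:ℝ)/2 * ((q:ℝ)+3)) ≤ lamP l₀ ε₀ (q+1) := by
      have hg := (lam_facts' hε hl2 (q+1)).2.1
      have h2 : (2:ℝ) ^ ((100:ℝ)/ε₀ + 100*((q:ℝ)+1)) / 2 ≤ lamP l₀ ε₀ (q+1) := by
        refine le_trans ?_ hg
        linarith
      refine le_trans ?_ h2
      rw [show (2:ℝ) ^ ((100:ℝ)/ε₀ + 100*((q:ℝ)+1)) / 2
          = 2 ^ ((100:ℝ)/ε₀ + 100*((q:ℝ)+1) - 1) from by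
        rw [Real.rpow_sub two_pos, Real.rpow_one]]
      apply Real.rpow_le_rpow_of_exponent_le one_le_two
      have h100 : (0:ℝ) < 100/ε₀ := by positivity
      have hqn : (0:ℝ) ≤ (q:ℝ) := Nat.cast_nonneg q
      linarith
    have h25 : ((2:ℝ)^(q+3) : ℝ) = ((2:ℝ) ^ ((5:ℝ)/2*((q:ℝ)+3))) ^ ((2:ℝ)/5) := by
      rw [← Real.rpow_mul (by norm_num),
        show (5:ℝ)/2*((q:ℝ)+3)*((2:ℝ)/5) = ((q+3 : ℕ):ℝ) from by push_cast; ring,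
        Real.rpow_natCast]
    have h1s : (1:ℝ) ≤ lamP l₀ ε₀ q ^ s := by
      calc (1:ℝ) = 1 ^ s := (Real.one_rpow s).symm
        _ ≤ lamP l₀ ε₀ q ^ s := Real.rpow_le_rpow (by norm_num) (hL1 q) (by rw [hse]; linarith)
    calc ((2:ℝ)^(q+3) : ℝ)
        = ((2:ℝ) ^ ((5:ℝ)/2*((q:ℝ)+3))) ^ ((2:ℝ)/5) := h25
      _ ≤ lamP l₀ ε₀ (q+1) ^ ((2:ℝ)/5) := Real.rpow_le_rpow (by positivity) hLq1 (by norm_num)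
      _ ≤ lamP l₀ ε₀ (q+1) ^ s := Real.rpow_le_rpow_of_exponent_le (hL1 (q+1)) (by rw [hse]; linarith)
      _ ≤ lamP l₀ ε₀ q ^ s * lamP l₀ ε₀ (q+1) ^ s :=
          le_mul_of_one_le_left (Real.rpow_nonneg hq1.le s) h1s
      _ = muP l₀ ε₀ (q+1) := hmu.symm
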